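/- arXiv:1906.00150 — 3 statements merged into one kernel-verified Lean document; each statement's English description precedes it below -/
import Mathlib

section
/- For every output coordinate l, the output h^L_l is integrable and its expectation satisfies E[h^L_l] = (∏_{i=1}^L n_{i-1} μ_w^i) · μ_x · μ_m. In particular, when μ_w^i ≠ 0 for all i and μ_x ≠ 0, the expected output is directly proportional to the mask mean μ_m (Theorem 1: variable sparsity problem for linear networks with zero imputation). -/
open MeasureTheory ProbabilityTheory

/-! ### Auxiliary definitions and lemmas -/

section Aux

variable {Ω : Type*} [MeasureSpace Ω]

/-- Monotonicity of `Indep` in both σ-algebras, with a flip. -/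
lemma vsp_indep_mono_symm {Ω' : Type*} {mΩ : MeasurableSpace Ω'}
    {m1 m1' m2 m2' : MeasurableSpace Ω'} {μ : @MeasureTheory.Measure Ω' mΩ}
    (h : @Indep Ω' m1' m2' mΩ μ) (h1 : m2 ≤ m1') (h2 : m1 ≤ m2') :
    @Indep Ω' m1 m2 mΩ μ := by
  rw [Indep_iff] at h ⊢
  intro t1 t2 ht1 ht2
  rw [Set.inter_comm, h t2 t1 (h1 t2 ht2) (h2 t1 ht1), mul_comm]

/-- `iIndepFun` is preserved by a.e. modification of each member of the family. -/
lemma vsp_iIndepFun_congr_ae {ι : Type*} {f g : ι → Ω → ℝ} {μ : Measure Ω}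
    (hfg : ∀ i, f i =ᵐ[μ] g i)
    (hf : iIndepFun f μ) :
    iIndepFun g μ := by
  rw [iIndepFun_iff_measure_inter_preimage_eq_mul] at hf ⊢
  intro S sets H
  have hae : ∀ᵐ ω ∂μ, ∀ i ∈ S, f i ω = g i ω :=
    (ae_ball_iff S.countable_toSet).2 fun i _ => hfg i
  have h1 : μ (⋂ i ∈ S, g i ⁻¹' sets i) = μ (⋂ i ∈ S, f i ⁻¹' sets i) := by
    refine measure_congr ?_
    rw [Filter.eventuallyEq_set]
    filter_upwards [hae] with ω hω
    simp only [Set.mem_iInter, Set.mem_preimage]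
    exact ⟨fun hmem i hi => (hω i hi) ▸ hmem i hi,
      fun hmem i hi => (hω i hi) ▸ hmem i hi⟩
  have h2 : ∀ i ∈ S, μ (g i ⁻¹' sets i) = μ (f i ⁻¹' sets i) := by
    intro i hi
    refine measure_congr ?_
    rw [Filter.eventuallyEq_set]
    filter_upwards [hfg i] with ω hω
    simp [Set.mem_preimage, hω]
  rw [h1, hf S H]
  exact (Finset.prod_congr rfl h2).symm

/-- The layers of a linear network, defined recursively from the modified
weights `Wg` and the modified input layer `hg0`. -/
def vspNet (n : ℕ → ℕ) (Wg : (i : ℕ) → Fin (n (i + 1)) → Fin (n i) → Ω → ℝ)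
    (hg0 : Fin (n 0) → Ω → ℝ) : (i : ℕ) → Fin (n i) → Ω → ℝ
  | 0 => hg0
  | (i + 1) => fun j ω => ∑ k, Wg i j k ω * vspNet n Wg hg0 i k ω

end Aux

/-- **Theorem 1 (variable sparsity problem for linear networks).**
An `L`-layer linear network (identity activation, zero bias) is applied to the
zero-imputed input `h⁰ₖ = h̃⁰ₖ · mₖ`.  Layer `i` (for `0 ≤ i < L`, mapping
`h^i` to `h^{i+1}`) has weight matrix `W i` with integrable, mean-`μw i`
entries; the features `ht k` have mean `μx` and the masks `m k` have mean `μm`;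
all weight entries, features and masks are mutually independent.  Then every
output coordinate `h L l` is integrable and
`E[h L l] = (∏_{i<L} n i · μw i) · μx · μm`. -/
theorem vsp_linear_network
    {Ω : Type*} [MeasureSpace Ω] [IsProbabilityMeasure (ℙ : Measure Ω)]
    (L : ℕ) (hL : 1 ≤ L) (n : ℕ → ℕ) (hn : ∀ i ≤ L, 1 ≤ n i)
    (W : (i : ℕ) → Fin (n (i + 1)) → Fin (n i) → Ω → ℝ)
    (ht m : Fin (n 0) → Ω → ℝ)
    (μw : ℕ → ℝ) (μx μm : ℝ)
    (hWint : ∀ i < L, ∀ (j : Fin (n (i + 1))) (k : Fin (n i)), Integrable (W i j k))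
    (hWmean : ∀ i < L, ∀ (j : Fin (n (i + 1))) (k : Fin (n i)), ∫ ω, W i j k ω = μw i)
    (hhint : ∀ k, Integrable (ht k)) (hhmean : ∀ k, ∫ ω, ht k ω = μx)
    (hmint : ∀ k, Integrable (m k)) (hmmean : ∀ k, ∫ ω, m k ω = μm)
    (hindep : iIndepFun
      (Sum.elim
        (fun p : Σ i : Fin L, Fin (n ((i : ℕ) + 1)) × Fin (n (i : ℕ)) =>
          W p.1 p.2.1 p.2.2)
        (Sum.elim ht m)) ℙ)
    (h : (i : ℕ) → Fin (n i) → Ω → ℝ)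
    (h0 : ∀ (k : Fin (n 0)) (ω : Ω), h 0 k ω = ht k ω * m k ω)
    (hrec : ∀ i < L, ∀ (j : Fin (n (i + 1))) (ω : Ω),
      h (i + 1) j ω = ∑ k, W i j k ω * h i k ω) :
    ∀ l : Fin (n L), Integrable (h L l) ∧
      ∫ ω, h L l ω = (∏ i ∈ Finset.range L, (n i : ℝ) * μw i) * μx * μm := by
  classical
  -- the independent family
  have hFint : ∀ s : (Σ i : Fin L, Fin (n ((i : ℕ) + 1)) × Fin (n (i : ℕ))) ⊕
      (Fin (n 0) ⊕ Fin (n 0)),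
      Integrable (Sum.elim
        (fun p : Σ i : Fin L, Fin (n ((i : ℕ) + 1)) × Fin (n (i : ℕ)) =>
          W p.1 p.2.1 p.2.2) (Sum.elim ht m) s) := by
    rintro (⟨i, j, k⟩ | (k | k))
    · exact hWint i i.isLt j k
    · exact hhint k
    · exact hmint k
  -- measurable a.e. modifications (opaque witnesses)
  obtain ⟨g, hg_meas, hFg⟩ : ∃ g : ((Σ i : Fin L, Fin (n ((i : ℕ) + 1)) × Fin (n (i : ℕ))) ⊕
      (Fin (n 0) ⊕ Fin (n 0))) → Ω → ℝ,
      (∀ s, Measurable (g s)) ∧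
      (∀ s, (Sum.elim
        (fun p : Σ i : Fin L, Fin (n ((i : ℕ) + 1)) × Fin (n (i : ℕ)) =>
          W p.1 p.2.1 p.2.2) (Sum.elim ht m) s) =ᵐ[ℙ] g s) :=
    ⟨fun s => ((hFint s).aemeasurable).mk _,
      fun s => ((hFint s).aemeasurable).measurable_mk,
      fun s => ((hFint s).aemeasurable).ae_eq_mk⟩
  have hg_int : ∀ s, Integrable (g s) := fun s => (hFint s).congr (hFg s)
  have hg_integral : ∀ s, ∫ ω, g s ω = ∫ ω, (Sum.elim
      (fun p : Σ i : Fin L, Fin (n ((i : ℕ) + 1)) × Fin (n (i : ℕ)) =>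
        W p.1 p.2.1 p.2.2) (Sum.elim ht m) s) ω :=
    fun s => integral_congr_ae (hFg s).symm
  have hg_indep : iIndepFun g ℙ :=
    vsp_iIndepFun_congr_ae hFg hindep
  -- the modified weights (opaque)
  obtain ⟨Wg, hWg_eq, hWg_zero⟩ : ∃ Wg : (i : ℕ) → Fin (n (i + 1)) → Fin (n i) → Ω → ℝ,
      (∀ (i : ℕ) (hi : i < L) (j : Fin (n (i + 1))) (k : Fin (n i)),
        Wg i j k = g (Sum.inl ⟨⟨i, hi⟩, (j, k)⟩)) ∧
      (∀ (i : ℕ), L ≤ i → ∀ (j : Fin (n (i + 1))) (k : Fin (n i)), Wg i j k = 0) :=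
    ⟨fun i j k => if hi : i < L then g (Sum.inl ⟨⟨i, hi⟩, (j, k)⟩) else 0,
      fun i hi j k => dif_pos hi, fun i hi j k => dif_neg (not_lt.2 hi)⟩
  -- the modified network (opaque, with its recursion equations)
  obtain ⟨h', h'zero, h'succ⟩ : ∃ h' : (i : ℕ) → Fin (n i) → Ω → ℝ,
      (∀ k, h' 0 k = fun ω => g (Sum.inr (Sum.inl k)) ω * g (Sum.inr (Sum.inr k)) ω) ∧
      (∀ (i : ℕ) (j : Fin (n (i + 1))),
        h' (i + 1) j = fun ω => ∑ k, Wg i j k ω * h' i k ω) :=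
    ⟨vspNet n Wg (fun k ω => g (Sum.inr (Sum.inl k)) ω * g (Sum.inr (Sum.inr k)) ω),
      fun k => rfl, fun i j => rfl⟩
  -- a.e. equality of the two networks
  have heq : ∀ i, i ≤ L → ∀ k, h i k =ᵐ[ℙ] h' i k := by
    intro i
    induction i with
    | zero =>
      intro _ k
      filter_upwards [hFg (Sum.inr (Sum.inl k)), hFg (Sum.inr (Sum.inr k))] with ω h1 h2
      rw [h'zero k]
      simp only [Sum.elim_inr, Sum.elim_inl] at h1 h2
      rw [h0 k ω, h1, h2]
    | succ i ih =>
      intro hiL j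
      have hi : i < L := lt_of_lt_of_le (Nat.lt_succ_self i) hiL
      have hWae : ∀ᵐ ω ∂ℙ, ∀ k : Fin (n i),
          W i j k ω = g (Sum.inl ⟨⟨i, hi⟩, (j, k)⟩) ω := by
        rw [ae_all_iff]
        intro k
        filter_upwards [hFg (Sum.inl ⟨⟨i, hi⟩, (j, k)⟩)] with ω hω
        exact hω
      have hhae : ∀ᵐ ω ∂ℙ, ∀ k : Fin (n i), h i k ω = h' i k ω := by
        rw [ae_all_iff]
        exact fun k => ih hi.le k
      filter_upwards [hWae, hhae] with ω h1 h2
      rw [hrec i hi j ω, h'succ i j]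
      refine Finset.sum_congr rfl fun k _ => ?_
      rw [h1 k, h2 k, hWg_eq i hi j k]
  -- the index sets of the filtration (opaque)
  obtain ⟨S, hSinl, hSinr, hSnot⟩ : ∃ S : ℕ → Set ((Σ i : Fin L,
        Fin (n ((i : ℕ) + 1)) × Fin (n (i : ℕ))) ⊕ (Fin (n 0) ⊕ Fin (n 0))),
      (∀ (i : ℕ) (p : Σ t : Fin L, Fin (n ((t : ℕ) + 1)) × Fin (n (t : ℕ))),
        ((p.1 : ℕ) < i) → Sum.inl p ∈ S i) ∧
      (∀ (i : ℕ) (s : Fin (n 0) ⊕ Fin (n 0)), Sum.inr s ∈ S i) ∧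
      (∀ (i : ℕ) (p : Σ t : Fin L, Fin (n ((t : ℕ) + 1)) × Fin (n (t : ℕ))),
        i ≤ (p.1 : ℕ) → Sum.inl p ∉ S i) := by
    refine ⟨fun i => {s | Sum.elim
      (fun p : Σ t : Fin L, Fin (n ((t : ℕ) + 1)) × Fin (n (t : ℕ)) =>
        ((p.1 : ℕ) < i)) (fun _ => True) s}, ?_, ?_, ?_⟩
    · intro i p hp
      exact hp
    · intro i s
      trivial
    · intro i p hp
      exact fun hc => absurd hc (not_lt.2 hp)
  -- the filtration (opaque)
  obtain ⟨M, hM⟩ : ∃ M : ℕ → MeasurableSpace Ω,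
      ∀ i, M i = ⨆ s ∈ S i, MeasurableSpace.comap (g s) inferInstance :=
    ⟨_, fun i => rfl⟩
  have hMmono : ∀ i, M i ≤ M (i + 1) := by
    intro i
    rw [hM, hM]
    refine biSup_mono ?_
    rintro (⟨t, j, k⟩ | s) hs
    · exact hSinl _ _ (Nat.lt_succ_of_lt (by_contra fun hc =>
        hSnot i ⟨t, j, k⟩ (not_lt.1 hc) hs))
    · exact hSinr _ _
  have hgM : ∀ (i : ℕ) (s), s ∈ S i → Measurable[M i] (g s) := by
    intro i s hs
    apply Measurable.of_comap_le
    rw [hM]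
    exact le_biSup (fun s => MeasurableSpace.comap (g s) inferInstance) hs
  -- measurability of the modified network w.r.t. the filtration
  have hmeasM : ∀ i, ∀ k : Fin (n i), Measurable[M i] (h' i k) := by
    intro i
    induction i with
    | zero =>
      intro k
      rw [h'zero k]
      exact (hgM 0 _ (hSinr 0 _)).mul (hgM 0 _ (hSinr 0 _))
    | succ i ih =>
      intro j
      rw [h'succ i j]
      refine Finset.measurable_sum _ fun k _ => Measurable.mul ?_ ?_
      · by_cases hi : i < L
        · rw [hWg_eq i hi j k]
          exact hgM (i + 1) _ (hSinl (i + 1) _ (Nat.lt_succ_self i))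
        · rw [hWg_zero i (not_lt.1 hi) j k]
          exact @measurable_const ℝ Ω _ (M (i + 1)) 0
      · exact (ih k).mono (hMmono i) le_rfl
  -- independence of a weight of layer i from layer i of the network
  have hindep_step : ∀ (i : ℕ) (hi : i < L) (j : Fin (n (i + 1))) (k k' : Fin (n i)),
      IndepFun (Wg i j k') (h' i k) ℙ := by
    intro i hi j k k'
    have hdis : Disjoint (S i) ({Sum.inl ⟨⟨i, hi⟩, (j, k')⟩} : Set _) :=
      Set.disjoint_singleton_right.mpr (hSnot i ⟨⟨i, hi⟩, (j, k')⟩ le_rfl)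
    have hbig : Indep (M i)
        (MeasurableSpace.comap (g (Sum.inl ⟨⟨i, hi⟩, (j, k')⟩)) inferInstance) ℙ := by
      have h2 := indep_iSup_of_disjoint (fun s => (hg_meas s).comap_le) hg_indep.iIndep hdis
      rw [iSup_singleton] at h2
      rw [hM]
      exact h2
    have hcomap : MeasurableSpace.comap (h' i k) inferInstance ≤ M i :=
      measurable_iff_comap_le.mp (hmeasM i k)
    have hfin : Indep (MeasurableSpace.comap (g (Sum.inl ⟨⟨i, hi⟩, (j, k')⟩)) inferInstance)
        (MeasurableSpace.comap (h' i k) inferInstance) ℙ :=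
      vsp_indep_mono_symm (m1' := M i) hbig hcomap le_rfl
    rw [hWg_eq i hi j k']
    exact (IndepFun_iff_Indep _ _ _).mpr hfin
  have hWg_int : ∀ (i : ℕ), i < L → ∀ (j : Fin (n (i + 1))) (k : Fin (n i)),
      Integrable (Wg i j k) := by
    intro i hi j k
    rw [hWg_eq i hi j k]
    exact hg_int _
  -- main induction: integrability and expectation of the modified network
  have key : ∀ i, i ≤ L → ∀ k : Fin (n i), Integrable (h' i k) ∧
      ∫ ω, h' i k ω = (∏ t ∈ Finset.range i, (n t : ℝ) * μw t) * μx * μm := by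
    intro i
    induction i with
    | zero =>
      intro _ k
      have hIF : IndepFun (g (Sum.inr (Sum.inl k))) (g (Sum.inr (Sum.inr k))) ℙ :=
        hg_indep.indepFun (fun hc => Sum.inl_ne_inr (Sum.inr.inj hc))
      constructor
      · rw [h'zero k]
        exact hIF.integrable_mul (hg_int _) (hg_int _)
      · have hmul := hIF.integral_mul_eq_mul_integral (hg_int _).aestronglyMeasurable (hg_int _).aestronglyMeasurable
        rw [h'zero k]
        rw [show (fun ω => g (Sum.inr (Sum.inl k)) ω * g (Sum.inr (Sum.inr k)) ω)
            = g (Sum.inr (Sum.inl k)) * g (Sum.inr (Sum.inr k)) from rfl, hmul,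
          hg_integral, hg_integral]
        simp only [Sum.elim_inr, Sum.elim_inl]
        rw [hhmean k, hmmean k]
        simp
    | succ i ih =>
      intro hiL j
      have hi : i < L := lt_of_lt_of_le (Nat.lt_succ_self i) hiL
      have hterm_int : ∀ k : Fin (n i), Integrable (fun ω => Wg i j k ω * h' i k ω) :=
        fun k => (hindep_step i hi j k k).integrable_mul (hWg_int i hi j k) ((ih hi.le k).1)
      constructor
      · rw [h'succ i j]
        exact integrable_finset_sum _ fun k _ => hterm_int k
      · rw [h'succ i j, integral_finset_sum _ fun k _ => hterm_int k]
        have hterm : ∀ k : Fin (n i),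
            (∫ ω, Wg i j k ω * h' i k ω)
              = μw i * ((∏ t ∈ Finset.range i, (n t : ℝ) * μw t) * μx * μm) := by
          intro k
          have hmul := (hindep_step i hi j k k).integral_mul_eq_mul_integral
            (hWg_int i hi j k).aestronglyMeasurable ((ih hi.le k).1).aestronglyMeasurable
          rw [show (fun ω => Wg i j k ω * h' i k ω) = Wg i j k * h' i k from rfl,
            hmul, (ih hi.le k).2, hWg_eq i hi j k, hg_integral]
          simp only [Sum.elim_inl]
          rw [hWmean i hi j k]
        rw [Finset.sum_congr rfl fun k _ => hterm k]
        rw [Finset.sum_const, Finset.card_univ, Fintype.card_fin, nsmul_eq_mul,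
          Finset.prod_range_succ]
        ring
  -- conclude
  intro l
  obtain ⟨hint, hval⟩ := key L le_rfl l
  refine ⟨hint.congr (heq L le_rfl l).symm, ?_⟩
  rw [integral_congr_ae (heq L le_rfl l), hval]
end

section
/- For every output coordinate l, the output h^L_l is integrable and its expectation satisfies E[h^L_l] = (f_L ∘ f_{L-1} ∘ ⋯ ∘ f_1)(μ_x · μ_m), where f_i(x) = σ(n_{i-1} μ_w^i x + μ_b^i). Hence the expected output of an affine-activation network under zero imputation is determined by the mask mean μ_m through the composition of the affine maps f_i (Theorem 2). -/
open MeasureTheory ProbabilityTheory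

/-- The composition `f_L ∘ ⋯ ∘ f_1` of the per-layer affine maps
`f_{i+1}(x) = σ (n i · μw i · x + μb i)` (0-based layer indexing):
`layerComp σ n μw μb L x = (f_L ∘ ⋯ ∘ f_1) x`. -/
def layerComp (σ : ℝ → ℝ) (n : ℕ → ℕ) (μw μb : ℕ → ℝ) : ℕ → ℝ → ℝ
  | 0, x => x
  | i + 1, x => σ ((n i : ℝ) * μw i * layerComp σ n μw μb i x + μb i)


private lemma indep_mono' {Ω : Type*} {mΩ : MeasurableSpace Ω} {μ : Measure Ω}
    {m₁ m₂ m₁' m₂' : MeasurableSpace Ω} (h : Indep m₁ m₂ μ)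
    (h1 : m₁' ≤ m₁) (h2 : m₂' ≤ m₂) : Indep m₁' m₂' μ := by
  rw [Indep_iff] at h ⊢
  exact fun t1 t2 ht1 ht2 => h t1 t2 (h1 _ ht1) (h2 _ ht2)

private lemma iIndepFun_ae_congr {Ω ι : Type*} {mΩ : MeasurableSpace Ω} {μ : Measure Ω}
    {β : ι → Type*} [m : ∀ i, MeasurableSpace (β i)] {f g : ∀ i, Ω → β i}
    (h : iIndepFun f μ) (hfg : ∀ i, f i =ᵐ[μ] g i) : iIndepFun g μ := by
  classical
  rw [iIndepFun_iff] at h ⊢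
  intro s E hE
  have key : ∀ i, i ∈ s → ∃ B : Set (β i), MeasurableSet B ∧ g i ⁻¹' B = E i := fun i hi => hE i hi
  choose B hBm hBe using key
  set E' : ι → Set Ω := fun i => if hi : i ∈ s then f i ⁻¹' B i hi else ∅ with hE'
  have hE'meas : ∀ i, i ∈ s → MeasurableSet[(m i).comap (f i)] (E' i) := by
    intro i hi
    rw [hE']
    simp only [dif_pos hi]
    exact ⟨B i hi, hBm i hi, rfl⟩
  have hae : ∀ i, ∀ hi : i ∈ s, E i =ᵐ[μ] E' i := by
    intro i hi
    rw [← hBe i hi, hE']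
    simp only [dif_pos hi]
    filter_upwards [hfg i] with ω hω
    show (g i ω ∈ B i hi) = (f i ω ∈ B i hi)
    rw [hω]
  have h1 : μ (⋂ i ∈ s, E i) = μ (⋂ i ∈ s, E' i) := by
    apply measure_congr
    rw [Filter.eventuallyEq_set]
    have : ∀ᵐ ω ∂μ, ∀ i ∈ s, (ω ∈ E i ↔ ω ∈ E' i) := by
      rw [Filter.eventually_all_finset]
      intro i hi
      have := hae i hi
      rw [Filter.eventuallyEq_set] at this
      filter_upwards [this] with ω hω using hω
    filter_upwards [this] with ω hω
    simp only [Set.mem_iInter]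
    exact ⟨fun h' i hi => (hω i hi).1 (h' i hi), fun h' i hi => (hω i hi).2 (h' i hi)⟩
  rw [h1, h s hE'meas]
  exact Finset.prod_congr rfl fun i hi => (measure_congr (hae i hi)).symm

private noncomputable def model {Ω : Type*} (n : ℕ → ℕ) (σ : ℝ → ℝ) (L : ℕ)
    (Wm : (i : Fin L) → Fin (n ((i : ℕ) + 1)) → Fin (n (i : ℕ)) → Ω → ℝ)
    (bm : (i : Fin L) → Fin (n ((i : ℕ) + 1)) → Ω → ℝ)
    (g0 : Fin (n 0) → Ω → ℝ) : (i : ℕ) → Fin (n i) → Ω → ℝ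
  | 0 => g0
  | (i + 1) => fun j ω =>
      if hi : i < L then
        σ (∑ k, Wm ⟨i, hi⟩ j k ω * model n σ L Wm bm g0 i k ω + bm ⟨i, hi⟩ j ω)
      else 0

/-- **Theorem 2 (variable sparsity problem for affine activations).**
An `L`-layer network with affine activation `σ x = a x + c` is applied to the
zero-imputed input `h⁰ₖ = h̃⁰ₖ · mₖ`.  Layer `i` (for `0 ≤ i < L`) has weight
matrix `W i` with integrable mean-`μw i` entries and bias `b i` with integrable
mean-`μb i` coordinates; features have mean `μx`, masks mean `μm`, and all
weights, biases, features and masks are mutually independent.  Then every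
output coordinate `h L l` is integrable and
`E[h L l] = (f_L ∘ ⋯ ∘ f_1)(μx · μm)` where `f_{i+1}(x) = σ (n i · μw i · x + μb i)`. -/
theorem vsp_affine_network
    {Ω : Type*} [MeasureSpace Ω] [IsProbabilityMeasure (ℙ : Measure Ω)]
    (L : ℕ) (hL : 1 ≤ L) (n : ℕ → ℕ) (hn : ∀ i ≤ L, 1 ≤ n i)
    (σ : ℝ → ℝ) (a c : ℝ) (hσ : ∀ x, σ x = a * x + c)
    (W : (i : ℕ) → Fin (n (i + 1)) → Fin (n i) → Ω → ℝ)
    (b : (i : ℕ) → Fin (n (i + 1)) → Ω → ℝ)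
    (ht m : Fin (n 0) → Ω → ℝ)
    (μw μb : ℕ → ℝ) (μx μm : ℝ)
    (hWint : ∀ i < L, ∀ (j : Fin (n (i + 1))) (k : Fin (n i)), Integrable (W i j k))
    (hWmean : ∀ i < L, ∀ (j : Fin (n (i + 1))) (k : Fin (n i)), ∫ ω, W i j k ω = μw i)
    (hbint : ∀ i < L, ∀ (j : Fin (n (i + 1))), Integrable (b i j))
    (hbmean : ∀ i < L, ∀ (j : Fin (n (i + 1))), ∫ ω, b i j ω = μb i)
    (hhint : ∀ k, Integrable (ht k)) (hhmean : ∀ k, ∫ ω, ht k ω = μx)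
    (hmint : ∀ k, Integrable (m k)) (hmmean : ∀ k, ∫ ω, m k ω = μm)
    (hindep : iIndepFun
      (Sum.elim
        (Sum.elim
          (fun p : Σ i : Fin L, Fin (n ((i : ℕ) + 1)) × Fin (n (i : ℕ)) =>
            W p.1 p.2.1 p.2.2)
          (fun p : Σ i : Fin L, Fin (n ((i : ℕ) + 1)) => b p.1 p.2))
        (Sum.elim ht m)) ℙ)
    (h : (i : ℕ) → Fin (n i) → Ω → ℝ)
    (h0 : ∀ (k : Fin (n 0)) (ω : Ω), h 0 k ω = ht k ω * m k ω)
    (hrec : ∀ i < L, ∀ (j : Fin (n (i + 1))) (ω : Ω),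
      h (i + 1) j ω = σ (∑ k, W i j k ω * h i k ω + b i j ω)) :
    ∀ l : Fin (n L), Integrable (h L l) ∧
      ∫ ω, h L l ω = layerComp σ n μw μb L (μx * μm) := by
  classical
  set X := (Sum.elim
        (Sum.elim
          (fun p : Σ i : Fin L, Fin (n ((i : ℕ) + 1)) × Fin (n (i : ℕ)) =>
            W p.1 p.2.1 p.2.2)
          (fun p : Σ i : Fin L, Fin (n ((i : ℕ) + 1)) => b p.1 p.2))
        (Sum.elim ht m)) with hXdef
  have hXae : ∀ idx, AEMeasurable (X idx) ℙ := by
    rintro ((⟨i, j, k⟩ | ⟨i, j⟩) | (k | k))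
    · exact (hWint i i.isLt j k).aemeasurable
    · exact (hbint i i.isLt j).aemeasurable
    · exact (hhint k).aemeasurable
    · exact (hmint k).aemeasurable
  set Y := fun idx => (hXae idx).mk (X idx) with hYdef
  have hYmeas : ∀ idx, Measurable (Y idx) := fun idx => (hXae idx).measurable_mk
  have hXYae : ∀ idx, X idx =ᵐ[ℙ] Y idx := fun idx => (hXae idx).ae_eq_mk
  have hindepY : iIndepFun Y ℙ := iIndepFun_ae_congr hindep hXYae
  have hXYW : ∀ (i : ℕ) (hi : i < L) (j : Fin (n (i + 1))) (k : Fin (n i)),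
      W i j k =ᵐ[ℙ] Y (Sum.inl (Sum.inl ⟨⟨i, hi⟩, (j, k)⟩)) :=
    fun i hi j k => hXYae (Sum.inl (Sum.inl ⟨⟨i, hi⟩, (j, k)⟩))
  have hXYb : ∀ (i : ℕ) (hi : i < L) (j : Fin (n (i + 1))),
      b i j =ᵐ[ℙ] Y (Sum.inl (Sum.inr ⟨⟨i, hi⟩, j⟩)) :=
    fun i hi j => hXYae (Sum.inl (Sum.inr ⟨⟨i, hi⟩, j⟩))
  have hXYh : ∀ k, ht k =ᵐ[ℙ] Y (Sum.inr (Sum.inl k)) := fun k => hXYae (Sum.inr (Sum.inl k))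
  have hXYm : ∀ k, m k =ᵐ[ℙ] Y (Sum.inr (Sum.inr k)) := fun k => hXYae (Sum.inr (Sum.inr k))
  -- the measurable model
  set g := model n σ L (fun i j k => Y (Sum.inl (Sum.inl ⟨i, (j, k)⟩)))
      (fun i j => Y (Sum.inl (Sum.inr ⟨i, j⟩)))
      (fun k ω => Y (Sum.inr (Sum.inl k)) ω * Y (Sum.inr (Sum.inr k)) ω) with hgdef
  have hg0 : ∀ k : Fin (n 0),
      g 0 k = fun ω => Y (Sum.inr (Sum.inl k)) ω * Y (Sum.inr (Sum.inr k)) ω := fun _ => rfl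
  have hgsucc : ∀ (i : ℕ) (hi : i < L) (j : Fin (n (i + 1))), g (i + 1) j = fun ω =>
      σ (∑ k, Y (Sum.inl (Sum.inl ⟨⟨i, hi⟩, (j, k)⟩)) ω * g i k ω
        + Y (Sum.inl (Sum.inr ⟨⟨i, hi⟩, j⟩)) ω) := by
    intro i hi j
    funext ω
    simp only [hgdef, model, dif_pos hi]
  have hgsucc' : ∀ (i : ℕ) (hi : ¬ i < L) (j : Fin (n (i + 1))),
      g (i + 1) j = fun _ => (0 : ℝ) := by
    intro i hi j
    funext ω
    simp only [hgdef, model, dif_neg hi]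
  -- index sets of layers < i (plus all inputs)
  set S : ℕ → Set (((Σ i : Fin L, Fin (n ((i : ℕ) + 1)) × Fin (n (i : ℕ))) ⊕
      (Σ i : Fin L, Fin (n ((i : ℕ) + 1)))) ⊕ (Fin (n 0) ⊕ Fin (n 0))) :=
    fun i => {idx | Sum.elim (Sum.elim (fun p => (p.1 : ℕ) < i) (fun p => (p.1 : ℕ) < i))
      (fun _ => True) idx} with hSdef
  set G : ℕ → MeasurableSpace Ω :=
    fun i => ⨆ idx ∈ S i, MeasurableSpace.comap (Y idx) inferInstance with hGdef
  have hSmono : ∀ i, S i ⊆ S (i + 1) := by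
    intro i
    rintro ((⟨i', j, k⟩ | ⟨i', j⟩) | (k | k)) hmem <;>
      simp only [hSdef, Set.mem_setOf_eq, Sum.elim_inl, Sum.elim_inr] at hmem ⊢ <;> omega
  have hGmono : ∀ i, G i ≤ G (i + 1) := by
    intro i
    refine iSup₂_le fun idx hidx => ?_
    exact le_iSup₂ (f := fun idx (_ : idx ∈ S (i + 1)) =>
      MeasurableSpace.comap (Y idx) inferInstance) idx (hSmono i hidx)
  have hYmem : ∀ i : ℕ, ∀ idx ∈ S i, Measurable[G i] (Y idx) := by
    intro i idx hidx
    refine Measurable.of_comap_le ?_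
    exact le_iSup₂ (f := fun idx (_ : idx ∈ S i) =>
      MeasurableSpace.comap (Y idx) inferInstance) idx hidx
  -- (A) measurability of the model
  have hgmeas : ∀ i, ∀ k : Fin (n i), Measurable[G i] (g i k) := by
    intro i
    induction i with
    | zero =>
      intro k
      rw [hg0 k]
      exact (hYmem 0 (Sum.inr (Sum.inl k)) trivial).mul (hYmem 0 (Sum.inr (Sum.inr k)) trivial)
    | succ i ih =>
      intro j
      by_cases hi : i < L
      · have hrep : g (i + 1) j = fun ω =>
            a * (∑ k, Y (Sum.inl (Sum.inl ⟨⟨i, hi⟩, (j, k)⟩)) ω * g i k ω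
              + Y (Sum.inl (Sum.inr ⟨⟨i, hi⟩, j⟩)) ω) + c := by
          rw [hgsucc i hi j]
          funext ω
          rw [hσ]
        rw [hrep]
        have hWm : ∀ k : Fin (n i), Measurable[G (i + 1)]
            (Y (Sum.inl (Sum.inl ⟨⟨i, hi⟩, (j, k)⟩))) := by
          intro k
          refine hYmem (i + 1) _ ?_
          simp [hSdef]
        have hbm : Measurable[G (i + 1)] (Y (Sum.inl (Sum.inr ⟨⟨i, hi⟩, j⟩))) := by
          refine hYmem (i + 1) _ ?_
          simp [hSdef]
        have hsum : Measurable[G (i + 1)] (fun ω =>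
            ∑ k, Y (Sum.inl (Sum.inl ⟨⟨i, hi⟩, (j, k)⟩)) ω * g i k ω) := by
          refine Finset.measurable_sum _ fun k _ => ?_
          exact (hWm k).mul ((ih k).mono (hGmono i) le_rfl)
        exact (measurable_const.mul (hsum.add hbm)).add measurable_const
      · rw [hgsucc' i hi j]
        exact measurable_const
  -- (B) a.e. equality of h and the model
  have hae : ∀ i ≤ L, ∀ k : Fin (n i), h i k =ᵐ[ℙ] g i k := by
    intro i
    induction i with
    | zero =>
      intro _ k
      filter_upwards [hXYh k, hXYm k] with ω e1 e2
      rw [h0 k ω, hg0 k, e1, e2]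
    | succ i ih =>
      intro hle j
      have hi : i < L := Nat.lt_of_succ_le hle
      have hWae : ∀ᵐ ω ∂ℙ, ∀ k : Fin (n i),
          W i j k ω = Y (Sum.inl (Sum.inl ⟨⟨i, hi⟩, (j, k)⟩)) ω :=
        ae_all_iff.2 fun k => hXYW i hi j k
      have hgae : ∀ᵐ ω ∂ℙ, ∀ k : Fin (n i), h i k ω = g i k ω :=
        ae_all_iff.2 fun k => ih (le_of_lt hi) k
      filter_upwards [hWae, hgae, hXYb i hi j] with ω e1 e2 e3
      rw [hrec i hi j ω, hgsucc i hi j]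
      have hsum : (∑ k, W i j k ω * h i k ω)
          = ∑ k, Y (Sum.inl (Sum.inl ⟨⟨i, hi⟩, (j, k)⟩)) ω * g i k ω :=
        Finset.sum_congr rfl fun k _ => by rw [e1 k, e2 k]
      rw [hsum, e3]
  -- (C) integrability and mean of the model
  have hC : ∀ i ≤ L, ∀ k : Fin (n i),
      Integrable (g i k) ∧ ∫ ω, g i k ω = layerComp σ n μw μb i (μx * μm) := by
    intro i
    induction i with
    | zero =>
      intro _ k
      have hind : IndepFun (Y (Sum.inr (Sum.inl k))) (Y (Sum.inr (Sum.inr k))) ℙ :=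
        hindepY.indepFun (by simp)
      have hint1 : Integrable (Y (Sum.inr (Sum.inl k))) := (hhint k).congr (hXYh k)
      have hint2 : Integrable (Y (Sum.inr (Sum.inr k))) := (hmint k).congr (hXYm k)
      rw [hg0 k]
      refine ⟨hind.integrable_mul hint1 hint2, ?_⟩
      have e1 : ∫ ω, Y (Sum.inr (Sum.inl k)) ω = μx :=
        (integral_congr_ae (hXYh k)).symm.trans (hhmean k)
      have e2 : ∫ ω, Y (Sum.inr (Sum.inr k)) ω = μm :=
        (integral_congr_ae (hXYm k)).symm.trans (hmmean k)
      have hmul := hind.integral_mul_eq_mul_integral hint1.aestronglyMeasurable hint2.aestronglyMeasurable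
      simp only [layerComp]
      calc ∫ ω, Y (Sum.inr (Sum.inl k)) ω * Y (Sum.inr (Sum.inr k)) ω
          = (∫ ω, Y (Sum.inr (Sum.inl k)) ω) * ∫ ω, Y (Sum.inr (Sum.inr k)) ω := hmul
        _ = μx * μm := by rw [e1, e2]
    | succ i ih =>
      intro hle j
      have hi : i < L := Nat.lt_of_succ_le hle
      have ih' := ih (le_of_lt hi)
      -- independence of each weight from the previous layer
      have hprod : ∀ k : Fin (n i),
          IndepFun (Y (Sum.inl (Sum.inl ⟨⟨i, hi⟩, (j, k)⟩))) (g i k) ℙ := by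
        intro k
        have hnotmem : (Sum.inl (Sum.inl ⟨⟨i, hi⟩, (j, k)⟩)) ∉ S i := by
          simp [hSdef]
        have hdisj : Disjoint ({Sum.inl (Sum.inl ⟨⟨i, hi⟩, (j, k)⟩)} :
            Set _) (S i) := Set.disjoint_singleton_left.2 hnotmem
        have hbig := indep_iSup_of_disjoint
          (m := fun idx => MeasurableSpace.comap (Y idx) inferInstance)
          (fun idx => (hYmeas idx).comap_le)
          ((iIndepFun_iff_iIndep _ _ _).1 hindepY) hdisj
        rw [IndepFun_iff_Indep]
        refine indep_mono' hbig ?_ ?_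
        · exact le_iSup₂ (f := fun idx (_ : idx ∈ ({Sum.inl (Sum.inl ⟨⟨i, hi⟩, (j, k)⟩)} :
            Set _)) => MeasurableSpace.comap (Y idx) inferInstance) _ rfl
        · exact (hgmeas i k).comap_le
      have hWint' : ∀ k : Fin (n i), Integrable (Y (Sum.inl (Sum.inl ⟨⟨i, hi⟩, (j, k)⟩))) :=
        fun k => (hWint i hi j k).congr (hXYW i hi j k)
      have hbint' : Integrable (Y (Sum.inl (Sum.inr ⟨⟨i, hi⟩, j⟩))) :=
        (hbint i hi j).congr (hXYb i hi j)
      have hterm : ∀ k : Fin (n i),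
          Integrable (fun ω => Y (Sum.inl (Sum.inl ⟨⟨i, hi⟩, (j, k)⟩)) ω * g i k ω) :=
        fun k => (hprod k).integrable_mul (hWint' k) (ih' k).1
      have htermint : ∀ k : Fin (n i),
          ∫ ω, Y (Sum.inl (Sum.inl ⟨⟨i, hi⟩, (j, k)⟩)) ω * g i k ω
            = μw i * layerComp σ n μw μb i (μx * μm) := by
        intro k
        have h1 := (hprod k).integral_mul_eq_mul_integral (hWint' k).aestronglyMeasurable (ih' k).1.aestronglyMeasurable
        have eW : ∫ ω, Y (Sum.inl (Sum.inl ⟨⟨i, hi⟩, (j, k)⟩)) ω = μw i :=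
          (integral_congr_ae (hXYW i hi j k)).symm.trans (hWmean i hi j k)
        calc ∫ ω, Y (Sum.inl (Sum.inl ⟨⟨i, hi⟩, (j, k)⟩)) ω * g i k ω
            = (∫ ω, Y (Sum.inl (Sum.inl ⟨⟨i, hi⟩, (j, k)⟩)) ω) * ∫ ω, g i k ω := h1
          _ = μw i * layerComp σ n μw μb i (μx * μm) := by rw [eW, (ih' k).2]
      have hrep : g (i + 1) j = fun ω =>
          a * (∑ k, Y (Sum.inl (Sum.inl ⟨⟨i, hi⟩, (j, k)⟩)) ω * g i k ω
            + Y (Sum.inl (Sum.inr ⟨⟨i, hi⟩, j⟩)) ω) + c := by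
        rw [hgsucc i hi j]
        funext ω
        rw [hσ]
      have hsumint : Integrable (fun ω =>
          ∑ k, Y (Sum.inl (Sum.inl ⟨⟨i, hi⟩, (j, k)⟩)) ω * g i k ω) :=
        integrable_finset_sum _ fun k _ => hterm k
      have hinner : Integrable (fun ω =>
          ∑ k, Y (Sum.inl (Sum.inl ⟨⟨i, hi⟩, (j, k)⟩)) ω * g i k ω
            + Y (Sum.inl (Sum.inr ⟨⟨i, hi⟩, j⟩)) ω) := hsumint.add hbint'
      rw [hrep]
      constructor
      · exact (hinner.const_mul a).add (integrable_const c)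
      · rw [integral_add (hinner.const_mul a) (integrable_const c)]
        rw [integral_const_mul]
        rw [integral_add hsumint hbint']
        rw [integral_finset_sum _ fun k _ => hterm k]
        have eb : ∫ ω, Y (Sum.inl (Sum.inr ⟨⟨i, hi⟩, j⟩)) ω = μb i :=
          (integral_congr_ae (hXYb i hi j)).symm.trans (hbmean i hi j)
        rw [eb]
        rw [Finset.sum_congr rfl fun k _ => htermint k]
        simp only [Finset.sum_const, Finset.card_univ, Fintype.card_fin, nsmul_eq_mul,
          integral_const, measure_univ, probReal_univ, ENNReal.toReal_one, smul_eq_mul, one_mul]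
        rw [show layerComp σ n μw μb (i + 1) (μx * μm)
            = σ ((n i : ℝ) * μw i * layerComp σ n μw μb i (μx * μm) + μb i) from rfl, hσ]
        ring
  -- conclude
  intro l
  have hgl := hC L le_rfl l
  have hel := hae L le_rfl l
  refine ⟨hgl.1.congr hel.symm, ?_⟩
  rw [integral_congr_ae hel]
  exact hgl.2
end

section
/- Suppose the activation σ : ℝ → ℝ is non-decreasing and convex, μ_w^i > 0 for all i = 1, …, L, and every intermediate activation h^i_j (for all i and j) is integrable. Then for every output coordinate l, E[h^L_l] ≥ (f_L ∘ f_{L-1} ∘ ⋯ ∘ f_1)(μ_x · μ_m), where f_i(x) = σ(n_{i-1} μ_w^i x + μ_b^i). Thus the expected output is lower-bounded by a quantity depending on the mask mean μ_m (Theorem 3). -/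
open MeasureTheory ProbabilityTheory

set_option maxHeartbeats 2000000

/-- Auxiliary: `iIndepFun` is stable under a.e. modification of each variable. -/
lemma iIndepFun_congr_ae' {Ω ι : Type*} {_mΩ : MeasurableSpace Ω} {μ : Measure Ω}
    {β : ι → Type*} {m : ∀ i, MeasurableSpace (β i)} {f g : ∀ i, Ω → β i}
    (h : ∀ i, f i =ᵐ[μ] g i) (hf : iIndepFun (m := m) f μ) : iIndepFun (m := m) g μ := by
  classical
  rw [iIndepFun_iff] at hf ⊢
  intro s f' hf'
  have hf2 : ∀ i ∈ s, ∃ B, MeasurableSet[m i] B ∧ g i ⁻¹' B = f' i := fun i hi =>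
    MeasurableSpace.measurableSet_comap.mp (hf' i hi)
  choose B hBmeas hBeq using hf2
  set t : ι → Set Ω := fun i => if hi : i ∈ s then f i ⁻¹' B i hi else ∅ with ht_def
  have ht : ∀ i, i ∈ s → MeasurableSet[(m i).comap (f i)] (t i) := by
    intro i hi
    simp only [ht_def, dif_pos hi]
    exact ⟨B i hi, hBmeas i hi, rfl⟩
  have hae : ∀ i ∈ s, f' i =ᵐ[μ] t i := by
    intro i hi
    simp only [ht_def, dif_pos hi]
    rw [← hBeq i hi]
    filter_upwards [h i] with ω hω
    show (g i ω ∈ B i hi) = (f i ω ∈ B i hi)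
    rw [hω]
  have haeInter : (⋂ i ∈ s, f' i) =ᵐ[μ] ⋂ i ∈ s, t i := by
    have := Filter.EventuallyEq.biInter (l := ae μ) s.finite_toSet hae
    simpa using this
  rw [measure_congr haeInter, hf s ht]
  exact Finset.prod_congr rfl fun i hi => (measure_congr (hae i hi)).symm

/-- Auxiliary: predicate selecting, in the index type of the family of all network
randomness, the weights and biases of layers strictly below `i` together with all inputs. -/
def NetIdxBelow {L : ℕ} {α β : Fin L → Type*} {γ : Type*} (i : ℕ) :
    ((Σ j : Fin L, α j) ⊕ (Σ j : Fin L, β j)) ⊕ γ → Prop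
  | .inl (.inl q) => (q.1 : ℕ) < i
  | .inl (.inr q) => (q.1 : ℕ) < i
  | .inr _ => True


/-- Auxiliary: a variable of an independent family is independent of anything measurable
with respect to the σ-algebra generated by the variables in a set not containing it. -/
lemma indepFun_of_mem_iSup {Ω ι : Type*} [MeasurableSpace Ω] {μ : Measure Ω} {F : ι → Ω → ℝ}
    (hmeas : ∀ p, Measurable (F p)) (hindep : iIndepFun F μ)
    {S : Set ι} {p0 : ι} (hp0 : p0 ∉ S) {X : Ω → ℝ}
    (hX : Measurable[⨆ p ∈ S, MeasurableSpace.comap (F p) inferInstance] X) :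
    IndepFun (F p0) X μ := by
  rw [IndepFun_iff_Indep]
  have hIndep : Indep (⨆ p ∈ ({p0} : Set ι), MeasurableSpace.comap (F p) inferInstance)
      (⨆ p ∈ S, MeasurableSpace.comap (F p) inferInstance) μ :=
    indep_iSup_of_disjoint (fun p => (hmeas p).comap_le) hindep.iIndep
      (Set.disjoint_singleton_left.mpr hp0)
  exact indep_of_indep_of_le_left (indep_of_indep_of_le_right hIndep hX.comap_le)
    (le_biSup (fun p => MeasurableSpace.comap (F p) inferInstance) (Set.mem_singleton p0))

/-- Auxiliary: the network recursion built from given (measurable) data. -/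
def netH {Ω : Type*} (σ : ℝ → ℝ) (n : ℕ → ℕ)
    (W : (i : ℕ) → Fin (n (i + 1)) → Fin (n i) → Ω → ℝ)
    (b : (i : ℕ) → Fin (n (i + 1)) → Ω → ℝ)
    (x0 : Fin (n 0) → Ω → ℝ) : (i : ℕ) → Fin (n i) → Ω → ℝ
  | 0 => x0
  | i + 1 => fun j ω => σ (∑ k, W i j k ω * netH σ n W b x0 i k ω + b i j ω)

/-- **Theorem 3 (lower bound for non-decreasing convex activations).**
An `L`-layer network with a non-decreasing convex activation `σ` is applied to
the zero-imputed input `h⁰ₖ = h̃⁰ₖ · mₖ`.  Layer `i` (for `0 ≤ i < L`) has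
weight matrix `W i` with integrable mean-`μw i` entries where `μw i > 0`, and
bias `b i` with integrable mean-`μb i` coordinates; features have mean `μx`,
masks mean `μm`, all weights, biases, features and masks are mutually
independent, and every intermediate activation `h i j` is integrable.  Then for
every output coordinate, `E[h L l] ≥ (f_L ∘ ⋯ ∘ f_1)(μx · μm)` where
`f_{i+1}(x) = σ (n i · μw i · x + μb i)`. -/
theorem vsp_convex_network_lower_bound
    {Ω : Type*} [MeasureSpace Ω] [IsProbabilityMeasure (ℙ : Measure Ω)]
    (L : ℕ) (hL : 1 ≤ L) (n : ℕ → ℕ) (hn : ∀ i ≤ L, 1 ≤ n i)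
    (σ : ℝ → ℝ) (hσmono : Monotone σ) (hσconv : ConvexOn ℝ Set.univ σ)
    (W : (i : ℕ) → Fin (n (i + 1)) → Fin (n i) → Ω → ℝ)
    (b : (i : ℕ) → Fin (n (i + 1)) → Ω → ℝ)
    (ht m : Fin (n 0) → Ω → ℝ)
    (μw μb : ℕ → ℝ) (μx μm : ℝ)
    (hμw : ∀ i < L, 0 < μw i)
    (hWint : ∀ i < L, ∀ (j : Fin (n (i + 1))) (k : Fin (n i)), Integrable (W i j k))
    (hWmean : ∀ i < L, ∀ (j : Fin (n (i + 1))) (k : Fin (n i)), ∫ ω, W i j k ω = μw i)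
    (hbint : ∀ i < L, ∀ (j : Fin (n (i + 1))), Integrable (b i j))
    (hbmean : ∀ i < L, ∀ (j : Fin (n (i + 1))), ∫ ω, b i j ω = μb i)
    (hhint : ∀ k, Integrable (ht k)) (hhmean : ∀ k, ∫ ω, ht k ω = μx)
    (hmint : ∀ k, Integrable (m k)) (hmmean : ∀ k, ∫ ω, m k ω = μm)
    (hindep : iIndepFun
      (Sum.elim
        (Sum.elim
          (fun p : Σ i : Fin L, Fin (n ((i : ℕ) + 1)) × Fin (n (i : ℕ)) =>
            W p.1 p.2.1 p.2.2)
          (fun p : Σ i : Fin L, Fin (n ((i : ℕ) + 1)) => b p.1 p.2))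
        (Sum.elim ht m)) ℙ)
    (h : (i : ℕ) → Fin (n i) → Ω → ℝ)
    (h0 : ∀ (k : Fin (n 0)) (ω : Ω), h 0 k ω = ht k ω * m k ω)
    (hrec : ∀ i < L, ∀ (j : Fin (n (i + 1))) (ω : Ω),
      h (i + 1) j ω = σ (∑ k, W i j k ω * h i k ω + b i j ω))
    (hint : ∀ i ≤ L, ∀ (j : Fin (n i)), Integrable (h i j)) :
    ∀ l : Fin (n L), ∫ ω, h L l ω ≥ layerComp σ n μw μb L (μx * μm) := by
  classical
  set F := (Sum.elim
        (Sum.elim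
          (fun p : Σ i : Fin L, Fin (n ((i : ℕ) + 1)) × Fin (n (i : ℕ)) =>
            W p.1 p.2.1 p.2.2)
          (fun p : Σ i : Fin L, Fin (n ((i : ℕ) + 1)) => b p.1 p.2))
        (Sum.elim ht m)) with hFdef
  have Fint : ∀ p, Integrable (F p) := by
    rintro ((⟨i, j, k⟩ | ⟨i, j⟩) | (k | k))
    · exact hWint i.1 i.2 j k
    · exact hbint i.1 i.2 j
    · exact hhint k
    · exact hmint k
  set F' := fun p => (Fint p).1.mk (F p) with hF'def
  have hF'meas : ∀ p, Measurable (F' p) := fun p =>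
    (Fint p).1.stronglyMeasurable_mk.measurable
  have hF'ae : ∀ p, F p =ᵐ[ℙ] F' p := fun p => (Fint p).1.ae_eq_mk
  have hF'int : ∀ p, Integrable (F' p) := fun p => (Fint p).congr (hF'ae p)
  have hindep' : iIndepFun F' ℙ :=
    iIndepFun_congr_ae' hF'ae hindep
  -- measurable modifications of the network data
  set Wt : (i : ℕ) → Fin (n (i + 1)) → Fin (n i) → Ω → ℝ := fun i =>
    if hi : i < L then fun j k => F' (Sum.inl (Sum.inl ⟨⟨i, hi⟩, (j, k)⟩))
    else fun _ _ _ => 0 with hWtdef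
  set bt : (i : ℕ) → Fin (n (i + 1)) → Ω → ℝ := fun i =>
    if hi : i < L then fun j => F' (Sum.inl (Sum.inr ⟨⟨i, hi⟩, j⟩))
    else fun _ _ => 0 with hbtdef
  set x0' : Fin (n 0) → Ω → ℝ := fun k ω =>
    F' (Sum.inr (Sum.inl k)) ω * F' (Sum.inr (Sum.inr k)) ω with hx0def
  have hWteq : ∀ (i) (hi : i < L) (j : Fin (n (i + 1))) (k : Fin (n i)),
      Wt i j k = F' (Sum.inl (Sum.inl ⟨⟨i, hi⟩, (j, k)⟩)) := by
    intro i hi j k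
    simp only [hWtdef, dif_pos hi]
  have hbteq : ∀ (i) (hi : i < L) (j : Fin (n (i + 1))),
      bt i j = F' (Sum.inl (Sum.inr ⟨⟨i, hi⟩, j⟩)) := by
    intro i hi j
    simp only [hbtdef, dif_pos hi]
  set h' := netH σ n Wt bt x0' with hh'def
  have hσcont : Continuous σ := by
    have := hσconv.continuousOn isOpen_univ
    rwa [continuousOn_univ] at this
  -- the σ-algebras generated by the data of layers below `i`
  set mS : ℕ → MeasurableSpace Ω := fun i =>
    ⨆ p ∈ {p | NetIdxBelow i p}, MeasurableSpace.comap (F' p) inferInstance with hmSdef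
  have hcomap_le : ∀ p, MeasurableSpace.comap (F' p) inferInstance ≤
      (inferInstance : MeasurableSpace Ω) := fun p => (hF'meas p).comap_le
  have hmem_meas : ∀ i p, NetIdxBelow i p → Measurable[mS i] (F' p) := by
    intro i p hp
    have h1 : Measurable[MeasurableSpace.comap (F' p) inferInstance] (F' p) :=
      Measurable.of_comap_le le_rfl
    exact h1.mono (le_biSup (f := fun q => MeasurableSpace.comap (F' q) inferInstance)
      (s := {q | NetIdxBelow i q}) hp) le_rfl
  have hmS_mono : ∀ i i', i ≤ i' → mS i ≤ mS i' := by
    intro i i' hii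
    refine biSup_mono ?_
    rintro ((q | q) | q) hq
    · exact lt_of_lt_of_le hq hii
    · exact lt_of_lt_of_le hq hii
    · trivial
  -- main induction over layers
  have key : ∀ i, i ≤ L →
      (∀ k : Fin (n i), Measurable[mS i] (h' i k)) ∧
      (∀ k : Fin (n i), h i k =ᵐ[ℙ] h' i k) ∧
      (∀ k : Fin (n i), layerComp σ n μw μb i (μx * μm) ≤ ∫ ω, h' i k ω) := by
    intro i
    induction i with
    | zero =>
      intro _
      refine ⟨?_, ?_, ?_⟩
      · intro k
        exact (hmem_meas 0 (Sum.inr (Sum.inl k)) trivial).mul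
          (hmem_meas 0 (Sum.inr (Sum.inr k)) trivial)
      · intro k
        filter_upwards [hF'ae (Sum.inr (Sum.inl k)), hF'ae (Sum.inr (Sum.inr k))]
          with ω e1 e2
        rw [h0 k ω]
        show F (Sum.inr (Sum.inl k)) ω * F (Sum.inr (Sum.inr k)) ω = x0' k ω
        rw [hx0def, e1, e2]
      · intro k
        have hne : (Sum.inr (Sum.inl k) :
            ((Σ i : Fin L, Fin (n ((i : ℕ) + 1)) × Fin (n (i : ℕ))) ⊕
              (Σ i : Fin L, Fin (n ((i : ℕ) + 1)))) ⊕ (Fin (n 0) ⊕ Fin (n 0))) ≠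
            Sum.inr (Sum.inr k) := by simp
        have hind := hindep'.indepFun hne
        have e1 : ∫ ω, F' (Sum.inr (Sum.inl k)) ω = μx := by
          rw [← integral_congr_ae (hF'ae (Sum.inr (Sum.inl k)))]
          exact hhmean k
        have e2 : ∫ ω, F' (Sum.inr (Sum.inr k)) ω = μm := by
          rw [← integral_congr_ae (hF'ae (Sum.inr (Sum.inr k)))]
          exact hmmean k
        have hmul := hind.integral_mul_eq_mul_integral (hF'int _).1 (hF'int _).1
        have : ∫ ω, x0' k ω = μx * μm := by
          rw [hx0def]
          rw [show (fun k (ω : Ω) => F' (Sum.inr (Sum.inl k)) ω *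
            F' (Sum.inr (Sum.inr k)) ω) k =
            (F' (Sum.inr (Sum.inl k)) * F' (Sum.inr (Sum.inr k))) from rfl]
          rw [hmul, e1, e2]
        show layerComp σ n μw μb 0 (μx * μm) ≤ ∫ ω, x0' k ω
        rw [this]
        exact le_of_eq rfl
    | succ i ih =>
      intro hi1
      have hiL : i < L := hi1
      obtain ⟨ihm, ihae, ihle⟩ := ih hiL.le
      have hWt_ae : ∀ (j : Fin (n (i + 1))) (k : Fin (n i)),
          W i j k =ᵐ[ℙ] Wt i j k := by
        intro j k
        rw [hWteq i hiL j k]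
        exact hF'ae (Sum.inl (Sum.inl ⟨⟨i, hiL⟩, (j, k)⟩))
      have hbt_ae : ∀ (j : Fin (n (i + 1))), b i j =ᵐ[ℙ] bt i j := by
        intro j
        rw [hbteq i hiL j]
        exact hF'ae (Sum.inl (Sum.inr ⟨⟨i, hiL⟩, j⟩))
      have hWt_int : ∀ (j : Fin (n (i + 1))) (k : Fin (n i)), Integrable (Wt i j k) :=
        fun j k => (hWint i hiL j k).congr (hWt_ae j k)
      have hbt_int : ∀ (j : Fin (n (i + 1))), Integrable (bt i j) :=
        fun j => (hbint i hiL j).congr (hbt_ae j)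
      have hWt_mean : ∀ (j : Fin (n (i + 1))) (k : Fin (n i)),
          ∫ ω, Wt i j k ω = μw i := by
        intro j k
        rw [← integral_congr_ae (hWt_ae j k)]
        exact hWmean i hiL j k
      have hbt_mean : ∀ (j : Fin (n (i + 1))), ∫ ω, bt i j ω = μb i := by
        intro j
        rw [← integral_congr_ae (hbt_ae j)]
        exact hbmean i hiL j
      have hh'int : ∀ k : Fin (n i), Integrable (h' i k) :=
        fun k => (hint i hiL.le k).congr (ihae k)
      -- a.e. identification of layer i+1
      have hae1 : ∀ j : Fin (n (i + 1)), h (i + 1) j =ᵐ[ℙ] h' (i + 1) j := by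
        intro j
        have hWs : ∀ᵐ ω ∂ℙ, ∀ k : Fin (n i), W i j k ω = Wt i j k ω := by
          rw [ae_all_iff]
          exact fun k => hWt_ae j k
        have hhs : ∀ᵐ ω ∂ℙ, ∀ k : Fin (n i), h i k ω = h' i k ω := by
          rw [ae_all_iff]
          exact fun k => ihae k
        filter_upwards [hbt_ae j, hWs, hhs] with ω hbω hWω hhω
        rw [hrec i hiL j ω]
        show σ (∑ k, W i j k ω * h i k ω + b i j ω) =
          σ (∑ k, Wt i j k ω * h' i k ω + bt i j ω)
        congr 1
        rw [hbω]
        congr 1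
        exact Finset.sum_congr rfl fun k _ => by rw [hWω k, hhω k]
      -- measurability of layer i+1 w.r.t. mS (i+1)
      have hmeas1 : ∀ j : Fin (n (i + 1)), Measurable[mS (i + 1)] (h' (i + 1) j) := by
        intro j
        have hin : Measurable[mS (i + 1)]
            (fun ω => ∑ k, Wt i j k ω * h' i k ω + bt i j ω) := by
          apply Measurable.add
          · apply Finset.measurable_sum
            intro k _
            apply Measurable.mul
            · rw [hWteq i hiL j k]
              exact hmem_meas (i + 1) _ (Nat.lt_succ_self i)
            · exact (ihm k).mono (hmS_mono i (i + 1) (Nat.le_succ i)) le_rfl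
          · rw [hbteq i hiL j]
            exact hmem_meas (i + 1) _ (Nat.lt_succ_self i)
        exact hσcont.measurable.comp hin
      -- independence of W'-entries from layer-i activations
      have hSm : ∀ (j : Fin (n (i + 1))) (k : Fin (n i)),
          IndepFun (Wt i j k) (h' i k) ℙ := by
        intro j k
        rw [hWteq i hiL j k]
        refine indepFun_of_mem_iSup hF'meas hindep'
          (S := {p | NetIdxBelow i p}) (p0 := Sum.inl (Sum.inl ⟨⟨i, hiL⟩, (j, k)⟩))
          ?_ (ihm k)
        show ¬ (i < i)
        exact lt_irrefl i
      have hprodint : ∀ (j : Fin (n (i + 1))) (k : Fin (n i)),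
          Integrable (fun ω => Wt i j k ω * h' i k ω) :=
        fun j k => (hSm j k).integrable_mul (hWt_int j k) (hh'int k)
      refine ⟨hmeas1, hae1, ?_⟩
      intro j
      set c := layerComp σ n μw μb i (μx * μm) with hcdef
      set g : Ω → ℝ := fun ω => ∑ k, Wt i j k ω * h' i k ω + bt i j ω with hgdef
      have hgint : Integrable g :=
        (integrable_finset_sum _ fun k _ => hprodint j k).add (hbt_int j)
      have hgmean : ∫ ω, g ω = (∑ k : Fin (n i), μw i * ∫ ω, h' i k ω) + μb i := by
        rw [hgdef]
        rw [integral_add (integrable_finset_sum _ fun k _ => hprodint j k) (hbt_int j)]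
        rw [integral_finset_sum _ fun k _ => hprodint j k, hbt_mean j]
        congr 1
        refine Finset.sum_congr rfl fun k _ => ?_
        have hmul := (hSm j k).integral_mul_eq_mul_integral (hWt_int j k).1 (hh'int k).1
        calc ∫ ω, Wt i j k ω * h' i k ω
            = (∫ ω, Wt i j k ω) * ∫ ω, h' i k ω := hmul
          _ = μw i * ∫ ω, h' i k ω := by rw [hWt_mean j k]
      have hsum_ge : (n i : ℝ) * μw i * c + μb i ≤ ∫ ω, g ω := by
        rw [hgmean]
        have hconst : (∑ _k : Fin (n i), μw i * c) = (n i : ℝ) * (μw i * c) := by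
          simp [Finset.sum_const, Finset.card_univ, nsmul_eq_mul]
        have hle : (∑ _k : Fin (n i), μw i * c) ≤
            ∑ k : Fin (n i), μw i * ∫ ω, h' i k ω :=
          Finset.sum_le_sum fun k _ =>
            mul_le_mul_of_nonneg_left (ihle k) (hμw i hiL).le
        calc (n i : ℝ) * μw i * c + μb i
            = (∑ _k : Fin (n i), μw i * c) + μb i := by rw [hconst]; ring
          _ ≤ (∑ k : Fin (n i), μw i * ∫ ω, h' i k ω) + μb i :=
              add_le_add_left hle _
      have hcompint : Integrable (σ ∘ g) := (hint (i + 1) hi1 j).congr (hae1 j)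
      have hjensen : σ (∫ ω, g ω) ≤ ∫ ω, σ (g ω) :=
        hσconv.map_integral_le (hσcont.continuousOn) isClosed_univ
          (Filter.Eventually.of_forall fun ω => Set.mem_univ _) hgint hcompint
      calc layerComp σ n μw μb (i + 1) (μx * μm)
          = σ ((n i : ℝ) * μw i * c + μb i) := rfl
        _ ≤ σ (∫ ω, g ω) := hσmono hsum_ge
        _ ≤ ∫ ω, σ (g ω) := hjensen
        _ = ∫ ω, h' (i + 1) j ω := rfl
  obtain ⟨_, haeL, hleL⟩ := key L le_rfl
  intro l
  rw [ge_iff_le, integral_congr_ae (haeL l)]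
  exact hleL l
end
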